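/- Let E be a finite-dimensional complex normed space, P : ℝ → L(E) continuously differentiable with P(t)² = P(t) for all t, and A : ℝ → L(E) continuous. If b : ℝ → E is differentiable and satisfies b'(t) = (P(t) A(t) + P'(t)) b(t) for all t, and P(0) b(0) = b(0), then P(t) b(t) = b(t) for all t ∈ ℝ. -/

import Mathlib

open Set


/-- If `P` is a C¹ curve of projections, `A` a continuous curve of
operators, and `b` solves `b' = (P A + P') b` with `P(0) b(0) = b(0)`, then
`P(t) b(t) = b(t)` for all `t`: the modified amplitude equation preserves the
constraint `b(t) ∈ Range P(t)`. -/
theorem stmt_9 {E : Type*} [NormedAddCommGroup E] [NormedSpace ℂ E]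
    [FiniteDimensional ℂ E]
    (P P' : ℝ → E →L[ℂ] E)
    (hP : ∀ t, HasDerivAt P (P' t) t) (hP'cont : Continuous P')
    (hproj : ∀ t, (P t).comp (P t) = P t)
    (A : ℝ → E →L[ℂ] E) (hA : Continuous A)
    (b : ℝ → E)
    (hb : ∀ t, HasDerivAt b (((P t).comp (A t) + P' t) (b t)) t)
    (hb0 : P 0 (b 0) = b 0) :
    ∀ t : ℝ, P t (b t) = b t := by
  set L : (E →L[ℂ] E) →L[ℝ] (E →L[ℝ] E) :=
    ContinuousLinearMap.restrictScalarsL ℂ E E ℝ ℝ with hL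
  set Q : ℝ → E →L[ℝ] E := fun t => L (P t) with hQ
  set Q' : ℝ → E →L[ℝ] E := fun t => L (P' t) with hQ'
  have hQapp : ∀ t x, Q t x = P t x := fun t x => rfl
  have hQ'app : ∀ t x, Q' t x = P' t x := fun t x => rfl
  have hQd : ∀ t, HasDerivAt Q (Q' t) t := fun t =>
    (L.hasFDerivAt.comp_hasDerivAt t (hP t))
  have hQproj : ∀ t, (Q t).comp (Q t) = Q t := by
    intro t
    ext x
    exact congrFun (congrArg DFunLike.coe (hproj t)) x
  -- Leibniz rule on Q² = Q
  have key : ∀ t, Q' t = (Q' t).comp (Q t) + (Q t).comp (Q' t) := by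
    intro t
    have h1 : HasDerivAt (fun s => (Q s).comp (Q s))
        ((Q' t).comp (Q t) + (Q t).comp (Q' t)) t := (hQd t).clm_comp (hQd t)
    have h2 : (fun s => (Q s).comp (Q s)) = Q := funext hQproj
    rw [h2] at h1
    exact (h1.unique (hQd t)).symm
  set r : ℝ → E := fun t => b t - Q t (b t) with hrdef
  have hPP : ∀ t x, Q t (Q t x) = Q t x := by
    intro t x
    exact congrFun (congrArg (DFunLike.coe) (hQproj t)) x
  have hrd : ∀ t, HasDerivAt r (-(Q' t (r t))) t := by
    intro t
    have hPb : HasDerivAt (fun s => Q s (b s))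
        (Q' t (b t) + Q t (((P t).comp (A t) + P' t) (b t))) t :=
      (hQd t).clm_apply (hb t)
    have h := (hb t).sub hPb
    have e1 : ((P t).comp (A t) + P' t) (b t)
        = Q t (A t (b t)) + Q' t (b t) := rfl
    rw [e1] at h
    convert h using 1
    · rfl
    have k := congrFun (congrArg (DFunLike.coe) (key t)) (b t)
    simp only [ContinuousLinearMap.add_apply, ContinuousLinearMap.comp_apply] at k
    have hk : Q t (Q' t (b t)) = Q' t (b t) - Q' t (Q t (b t)) :=
      eq_sub_of_add_eq' k.symm
    rw [hrdef]
    simp only [map_sub, map_add, hPP, hk]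
    abel
  intro T
  have hr0 : r 0 = 0 := by
    simp only [hrdef]
    rw [hQapp, hb0, sub_self]
  suffices hrT : r T = 0 by
    have h1 : b T - Q T (b T) = 0 := hrT
    rw [sub_eq_zero] at h1
    rw [← hQapp]
    exact h1.symm
  set c : ℝ := |T| + 1 with hc
  have hcpos : 0 < c := by positivity
  have hTmem : T ∈ Icc (-c) c := by
    constructor
    · linarith [neg_abs_le T]
    · linarith [le_abs_self T]
  obtain ⟨C, hCraw⟩ := (isCompact_Icc (a := -c) (b := c)).exists_bound_of_continuousOn
    ((hP'cont.norm).continuousOn)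
  have hC : ∀ x ∈ Icc (-c) c, ‖P' x‖ ≤ C := by
    intro x hx
    have := hCraw x hx
    rwa [Real.norm_eq_abs, abs_of_nonneg (norm_nonneg _)] at this
  have hC0 : 0 ≤ C := le_trans (norm_nonneg _) (hC 0 ⟨by linarith, by linarith⟩)
  set q : ℝ → ℝ := fun s => max (-c) (min s c) with hq
  have hqmem : ∀ s, q s ∈ Icc (-c) c := by
    intro s
    refine ⟨le_max_left _ _, max_le (by linarith) (min_le_right _ _)⟩
  have hqid : ∀ s ∈ Icc (-c) c, q s = s := by
    intro s hs
    rw [hq]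
    simp only
    rw [min_eq_left hs.2, max_eq_right hs.1]
  set v : ℝ → E → E := fun t x => -(Q' (q t) x) with hv
  have hlip : ∀ t, LipschitzWith C.toNNReal (v t) := by
    intro t
    have h1 : LipschitzWith ‖-(Q' (q t))‖₊ (fun x => (-(Q' (q t))) x) :=
      (-(Q' (q t))).lipschitz
    have h2 : (fun x => (-(Q' (q t))) x) = v t := by
      funext x; simp [hv]
    rw [h2] at h1
    refine h1.weaken ?_
    rw [← NNReal.coe_le_coe, coe_nnnorm, norm_neg, Real.coe_toNNReal _ hC0]
    have hQn : ‖Q' (q t)‖ = ‖P' (q t)‖ := by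
      have hrs : Q' (q t) = (P' (q t)).restrictScalars ℝ := rfl
      rw [hrs, ContinuousLinearMap.norm_restrictScalars]
    rw [hQn]
    exact hC _ (hqmem t)
  have h0mem : (0 : ℝ) ∈ Ioo (-c) c := ⟨by linarith, hcpos⟩
  have heq : EqOn r (fun _ => (0 : E)) (Icc (-c) c) := by
    apply ODE_solution_unique_of_mem_Icc (v := v) (s := fun _ => univ)
      (K := C.toNNReal) (fun t _ => (hlip t).lipschitzOnWith) h0mem
    · exact fun t _ => (hrd t).continuousAt.continuousWithinAt
    · intro t ht
      have := hrd t
      rw [hv]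
      simp only
      rw [hqid t (Ioo_subset_Icc_self ht)]
      exact this
    · exact fun _ _ => trivial
    · exact continuousOn_const
    · intro t ht
      have : v t 0 = 0 := by simp [hv]
      rw [this]
      exact hasDerivAt_const t 0
    · exact fun _ _ => trivial
    · exact hr0
  exact heq hTmem
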